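/- Let a, b be unit vectors in ℂ² that are not orthogonal and not parallel (0 < |⟨a|b⟩| < 1). Then the three-qubit vector b⊗a⊗a + a⊗b⊗a + a⊗a⊗b (normalized) is NOT local-unitarily equivalent to the W state. Equivalently (contrapositive of Theorem 3's necessity): if the switch output state with each local factor pair (UᵢŨᵢ|φᵢ⟩, ŨᵢUᵢ|φᵢ⟩) is LU-equivalent to W, then ⟨φᵢ|(ŨᵢUᵢ)†(UᵢŨᵢ)|φᵢ⟩ = 0 for every i. -/

import Mathlib

open Matrix Complex

noncomputable section

abbrev Q3 := Fin 2 × Fin 2 × Fin 2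

def inner2 (u v : Fin 2 → ℂ) : ℂ := ∑ i, star (u i) * v i

def tens3 (a b c : Fin 2 → ℂ) : Q3 → ℂ := fun p => a p.1 * b p.2.1 * c p.2.2

def kron3 (A B C : Matrix (Fin 2) (Fin 2) ℂ) : Matrix Q3 Q3 ℂ :=
  Matrix.of fun p q => A p.1 q.1 * B p.2.1 q.2.1 * C p.2.2 q.2.2

/-- The three-qubit W state `(|100⟩+|010⟩+|001⟩)/√3`. -/
def w3 : Q3 → ℂ := fun p =>
  ((Real.sqrt 3 : ℝ) : ℂ)⁻¹ *
    ((if p = (1, 0, 0) then 1 else 0) + (if p = (0, 1, 0) then 1 else 0) +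
      (if p = (0, 0, 1) then 1 else 0))

set_option linter.unusedVariables false

-- reshape
def mat3 (ψ : Q3 → ℂ) : Matrix (Fin 2) (Fin 2 × Fin 2) ℂ := Matrix.of fun i q => ψ (i, q)

def M1 (ψ : Q3 → ℂ) : Matrix (Fin 2) (Fin 2) ℂ := mat3 ψ * (mat3 ψ)ᴴ

def Nrm (ψ : Q3 → ℂ) : ℂ := (M1 ψ).trace
def Pur (ψ : Q3 → ℂ) : ℂ := (M1 ψ * M1 ψ).trace

def K2 (B C : Matrix (Fin 2) (Fin 2) ℂ) : Matrix (Fin 2 × Fin 2) (Fin 2 × Fin 2) ℂ :=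
  Matrix.of fun p q => B p.1 q.1 * C p.2 q.2

lemma mat3_mulVec (W₀ W₁ W₂ : Matrix (Fin 2) (Fin 2) ℂ) (ψ : Q3 → ℂ) :
    mat3 ((kron3 W₀ W₁ W₂).mulVec ψ) = W₀ * mat3 ψ * (K2 W₁ W₂)ᵀ := by
  ext i ⟨j, k⟩
  simp only [mat3, K2, kron3, of_apply, Matrix.mul_apply, mulVec, dotProduct,
    transpose_apply, Fintype.sum_prod_type, Fin.sum_univ_two, Finset.sum_mul, Finset.mul_sum]
  ring

lemma K2_unit {W₁ W₂ : Matrix (Fin 2) (Fin 2) ℂ}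
    (h1 : W₁ ∈ Matrix.unitaryGroup (Fin 2) ℂ) (h2 : W₂ ∈ Matrix.unitaryGroup (Fin 2) ℂ) :
    (K2 W₁ W₂)ᵀ * ((K2 W₁ W₂)ᵀ)ᴴ = 1 := by
  have e1 : W₁ᴴ * W₁ = 1 := h1.1
  have e2 : W₂ᴴ * W₂ = 1 := h2.1
  ext ⟨p1, p2⟩ ⟨q1, q2⟩
  have key : ((K2 W₁ W₂)ᵀ * ((K2 W₁ W₂)ᵀ)ᴴ) (p1, p2) (q1, q2)
      = (W₁ᴴ * W₁) q1 p1 * ((W₂ᴴ * W₂) q2 p2) := by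
    simp only [K2, Matrix.mul_apply, conjTranspose_apply, transpose_apply, of_apply,
      Fintype.sum_prod_type, Fin.sum_univ_two, star_mul']
    ring
  rw [key, e1, e2]
  fin_cases p1 <;> fin_cases p2 <;> fin_cases q1 <;> fin_cases q2 <;>
    norm_num [Matrix.one_apply, Prod.ext_iff]

lemma M1_mulVec {W₀ W₁ W₂ : Matrix (Fin 2) (Fin 2) ℂ}
    (h1 : W₁ ∈ Matrix.unitaryGroup (Fin 2) ℂ) (h2 : W₂ ∈ Matrix.unitaryGroup (Fin 2) ℂ)
    (ψ : Q3 → ℂ) :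
    M1 ((kron3 W₀ W₁ W₂).mulVec ψ) = W₀ * M1 ψ * W₀ᴴ := by
  have hK : ∀ X : Matrix (Fin 2 × Fin 2) (Fin 2) ℂ,
      (K2 W₁ W₂)ᵀ * (((K2 W₁ W₂)ᵀ)ᴴ * X) = X := fun X => by
    rw [← Matrix.mul_assoc, K2_unit h1 h2, Matrix.one_mul]
  simp only [M1, mat3_mulVec, conjTranspose_mul, Matrix.mul_assoc, hK]

lemma Nrm_mulVec {W₀ W₁ W₂ : Matrix (Fin 2) (Fin 2) ℂ}
    (h0 : W₀ ∈ Matrix.unitaryGroup (Fin 2) ℂ)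
    (h1 : W₁ ∈ Matrix.unitaryGroup (Fin 2) ℂ) (h2 : W₂ ∈ Matrix.unitaryGroup (Fin 2) ℂ)
    (ψ : Q3 → ℂ) :
    Nrm ((kron3 W₀ W₁ W₂).mulVec ψ) = Nrm ψ := by
  have e0 : W₀ᴴ * W₀ = 1 := h0.1
  rw [Nrm, M1_mulVec h1 h2, Matrix.trace_mul_cycle, e0, Matrix.one_mul, Nrm]
  

lemma Pur_mulVec {W₀ W₁ W₂ : Matrix (Fin 2) (Fin 2) ℂ}
    (h0 : W₀ ∈ Matrix.unitaryGroup (Fin 2) ℂ)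
    (h1 : W₁ ∈ Matrix.unitaryGroup (Fin 2) ℂ) (h2 : W₂ ∈ Matrix.unitaryGroup (Fin 2) ℂ)
    (ψ : Q3 → ℂ) :
    Pur ((kron3 W₀ W₁ W₂).mulVec ψ) = Pur ψ := by
  have e0' : W₀ᴴ * W₀ = 1 := h0.1
  have e0 : ∀ X : Matrix (Fin 2) (Fin 2) ℂ, W₀ᴴ * (W₀ * X) = X := fun X => by
    rw [← Matrix.mul_assoc, e0', Matrix.one_mul]
  rw [Pur, M1_mulVec h1 h2]
  rw [show W₀ * M1 ψ * W₀ᴴ * (W₀ * M1 ψ * W₀ᴴ) = W₀ * (M1 ψ * M1 ψ) * W₀ᴴ by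
    simp only [Matrix.mul_assoc, e0]]
  rw [Matrix.trace_mul_cycle, e0', Matrix.one_mul, Pur]

lemma M1_smul (z : ℂ) (ψ : Q3 → ℂ) : M1 (z • ψ) = (z * star z) • M1 ψ := by
  ext i i'
  simp only [M1, mat3, Matrix.mul_apply, conjTranspose_apply, of_apply, Pi.smul_apply,
    smul_eq_mul, star_mul', Matrix.smul_apply, Finset.mul_sum]
  exact Finset.sum_congr rfl fun q _ => by ring

lemma Nrm_smul (z : ℂ) (ψ : Q3 → ℂ) : Nrm (z • ψ) = z * star z * Nrm ψ := by
  rw [Nrm, M1_smul, Matrix.trace_smul, Nrm, smul_eq_mul]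

lemma Pur_smul (z : ℂ) (ψ : Q3 → ℂ) : Pur (z • ψ) = (z * star z) ^ 2 * Pur ψ := by
  rw [Pur, M1_smul, Matrix.smul_mul, Matrix.mul_smul, smul_smul, Matrix.trace_smul, Pur,
    smul_eq_mul, sq]

lemma Nrm_w3 : Nrm w3 = 1 := by
  have h3 : ((Real.sqrt 3 : ℝ) : ℂ)⁻¹ * ((Real.sqrt 3 : ℝ) : ℂ)⁻¹ = (3 : ℂ)⁻¹ := by
    rw [← mul_inv, ← Complex.ofReal_mul, Real.mul_self_sqrt (by norm_num)]
    norm_num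
  simp only [Nrm, M1, mat3, w3, Matrix.trace_fin_two, Matrix.mul_apply, conjTranspose_apply,
    of_apply, Fintype.sum_prod_type, Fin.sum_univ_two, Prod.mk.injEq]
  norm_num [star_mul', h3, ← Complex.ofReal_inv]
  ring_nf
  norm_cast
  rw [inv_pow, Real.sq_sqrt (by norm_num)]
  norm_num

lemma Pur_w3 : Pur w3 = 5 / 9 := by
  simp only [Pur, M1, mat3, w3, Matrix.trace_fin_two, Matrix.mul_apply, conjTranspose_apply,
    of_apply, Fintype.sum_prod_type, Fin.sum_univ_two, Prod.mk.injEq]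
  norm_num [star_mul', ← Complex.ofReal_inv]
  ring_nf
  norm_cast
  rw [show ((Real.sqrt 3)⁻¹ : ℝ) ^ 4 = ((Real.sqrt 3 ^ 2) ^ 2)⁻¹ by rw [← inv_pow]; ring,
    Real.sq_sqrt (by norm_num)]
  norm_num

lemma Nrm_real (ψ : Q3 → ℂ) : Nrm ψ = ((∑ p, Complex.normSq (ψ p) : ℝ) : ℂ) := by
  simp only [Nrm, M1, mat3, Matrix.trace_fin_two, Matrix.mul_apply, conjTranspose_apply,
    of_apply, Fintype.sum_prod_type, Fin.sum_univ_two, Complex.star_def, Complex.mul_conj]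
  push_cast
  ring

lemma Nrm_v (a b : Fin 2 → ℂ) :
    Nrm (tens3 b a a + tens3 a b a + tens3 a a b) =
      3 * (inner2 a a) ^ 2 * inner2 b b + 6 * inner2 a b * inner2 b a * inner2 a a := by
  simp only [Nrm, M1, mat3, tens3, inner2, Matrix.trace_fin_two, Matrix.mul_apply,
    conjTranspose_apply, of_apply, Pi.add_apply, Fintype.sum_prod_type, Fin.sum_univ_two,
    star_add, star_mul']
  ring

lemma Pur_v (a b : Fin 2 → ℂ) :
    9 * Pur (tens3 b a a + tens3 a b a + tens3 a a b) =
      5 * (Nrm (tens3 b a a + tens3 a b a + tens3 a a b)) ^ 2 +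
        216 * inner2 a b * inner2 b a * (inner2 a a) ^ 3 * inner2 b b +
        108 * (inner2 a b) ^ 2 * (inner2 b a) ^ 2 * (inner2 a a) ^ 2 := by
  simp only [Pur, Nrm, M1, mat3, tens3, inner2, Matrix.trace_fin_two, Matrix.mul_apply,
    conjTranspose_apply, of_apply, Pi.add_apply, Fintype.sum_prod_type, Fin.sum_univ_two,
    star_add, star_mul']
  ring

lemma inner2_conj (a b : Fin 2 → ℂ) : inner2 b a = star (inner2 a b) := by
  simp only [inner2, Fin.sum_univ_two, star_add, star_mul', star_star]
  ring


/-- for unit vectors `a, b ∈ ℂ²` with `0 < |⟨a|b⟩| < 1` (neither orthogonal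
nor parallel), the normalized vector `∝ b⊗a⊗a + a⊗b⊗a + a⊗a⊗b` is NOT local-unitarily
equivalent to the W state. -/

theorem not_LU_equivalent_W
    (a b : Fin 2 → ℂ)
    (ha : inner2 a a = 1) (hb : inner2 b b = 1)
    (hnotorth : ‖inner2 a b‖ ≠ 0)
    (hnotpar : ‖inner2 a b‖ ≠ 1) :
    let v := tens3 b a a + tens3 a b a + tens3 a a b
    ¬ ∃ W₀ W₁ W₂ : Matrix (Fin 2) (Fin 2) ℂ,
        W₀ ∈ Matrix.unitaryGroup (Fin 2) ℂ ∧ W₁ ∈ Matrix.unitaryGroup (Fin 2) ℂ ∧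
        W₂ ∈ Matrix.unitaryGroup (Fin 2) ℂ ∧
        ((Real.sqrt (∑ p, Complex.normSq (v p)) : ℝ) : ℂ)⁻¹ • v =
          (kron3 W₀ W₁ W₂).mulVec w3 := by
  intro v
  rintro ⟨W₀, W₁, W₂, h0, h1, h2, heq⟩
  set z : ℂ := ((Real.sqrt (∑ p, Complex.normSq (v p)) : ℝ) : ℂ)⁻¹ with hz
  have hNrm : z * star z * Nrm v = 1 := by
    rw [← Nrm_smul, heq, Nrm_mulVec h0 h1 h2, Nrm_w3]
  have hPur : (z * star z) ^ 2 * Pur v = 5 / 9 := by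
    rw [← Pur_smul, heq, Pur_mulVec h0 h1 h2, Pur_w3]
  have hzz : z * star z ≠ 0 := by
    intro h
    rw [h, zero_mul] at hNrm
    exact zero_ne_one hNrm
  have h9 : 9 * Pur v = 5 * (Nrm v) ^ 2 := by
    apply mul_left_cancel₀ (pow_ne_zero 2 hzz)
    calc (z * star z) ^ 2 * (9 * Pur v) = 9 * ((z * star z) ^ 2 * Pur v) := by ring
      _ = 9 * (5 / 9) := by rw [hPur]
      _ = 5 * 1 ^ 2 := by norm_num
      _ = 5 * (z * star z * Nrm v) ^ 2 := by rw [hNrm]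
      _ = (z * star z) ^ 2 * (5 * (Nrm v) ^ 2) := by ring
  have hv : v = tens3 b a a + tens3 a b a + tens3 a a b := rfl
  rw [hv, Pur_v a b, Nrm_v a b] at h9
  rw [ha, hb, inner2_conj a b] at h9
  have hkey : 216 * (inner2 a b * star (inner2 a b)) +
      108 * (inner2 a b * star (inner2 a b)) ^ 2 = 0 := by linear_combination h9
  rw [Complex.star_def, Complex.mul_conj] at hkey
  set s : ℝ := Complex.normSq (inner2 a b) with hs
  have hr : 216 * s + 108 * s ^ 2 = 0 := by exact_mod_cast hkey
  have hspos : 0 < s := by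
    rw [hs]
    apply Complex.normSq_pos.2
    intro h
    exact hnotorth (by rw [h]; simp)
  nlinarith
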